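/- Let G be a bipartite graph, let v be a vertex of G, and let G' be the graph obtained from G by removing v, merging all neighbors of v into a single vertex v', and replacing each resulting family of parallel edges by a single edge. Then for every k ≥ 2: if G is [2,k]-choosable, then G' is [2,k]-choosable. -/

import Mathlib

open SimpleGraph

/-- A list coloring: proper coloring with each vertex colored from its list. -/
def IsListColoring {V : Type*} (G : SimpleGraph V) (L : V → Finset ℕ) (c : V → ℕ) : Prop :=
  (∀ v, c v ∈ L v) ∧ ∀ u v, G.Adj u v → c u ≠ c v

/-- A list assignment is feasible if some list coloring exists. -/
def Feasible {V : Type*} (G : SimpleGraph V) (L : V → Finset ℕ) : Prop :=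
  ∃ c, IsListColoring G L c

/-- `[f,k]`-choosability: every list assignment with colors in `{1,…,k}` and
list sizes given by `f` is feasible. -/
def ChoosableF {V : Type*} (G : SimpleGraph V) (f : V → ℕ) (k : ℕ) : Prop :=
  ∀ L : V → Finset ℕ, (∀ v, L v ⊆ Finset.Icc 1 k) → (∀ v, (L v).card = f v) →
    Feasible G L

/-- `[ℓ,k]`-choosability. -/
def Choosable {V : Type*} (G : SimpleGraph V) (ℓ k : ℕ) : Prop :=
  ChoosableF G (fun _ => ℓ) k

/-- Ideal `[ℓ,k]`-choosability: any color of any vertex's list can be extended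
to a full list coloring. -/
def IdeallyChoosable {V : Type*} (G : SimpleGraph V) (ℓ k : ℕ) : Prop :=
  ∀ L : V → Finset ℕ, (∀ v, L v ⊆ Finset.Icc 1 k) → (∀ v, (L v).card = ℓ) →
    ∀ v₀ : V, ∀ c ∈ L v₀, ∃ col, IsListColoring G L col ∧ col v₀ = c

/-- A block: a maximal (vertex) set inducing a connected subgraph with no cut vertex. -/
def IsBlock {V : Type*} (G : SimpleGraph V) (B : Set V) : Prop :=
  ((G.induce B).Connected ∧ ∀ v ∈ B, (G.induce (B \ {v})).Preconnected) ∧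
  ∀ B' : Set V, B ⊆ B' →
    ((G.induce B').Connected ∧ ∀ v ∈ B', (G.induce (B' \ {v})).Preconnected) → B' = B

/-- The graph `G'` obtained from `G` by deleting the vertex `v` and merging all
its neighbors into a single new vertex `v'` (represented by `none`), parallel
edges being merged. The remaining vertices are those distinct from `v` and not
adjacent to `v`. -/
def contractNbhd {V : Type*} (G : SimpleGraph V) (v : V) :
    SimpleGraph (Option {u : V // u ≠ v ∧ ¬ G.Adj v u}) where
  Adj x y :=
    match x, y with
    | none, none => False
    | none, some b => ∃ w, G.Adj v w ∧ G.Adj w b.1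
    | some a, none => ∃ w, G.Adj v w ∧ G.Adj a.1 w
    | some a, some b => G.Adj a.1 b.1
  symm := by
    refine ⟨?_⟩
    rintro (_ | a) (_ | b) h
    · exact h.elim
    · obtain ⟨w, h1, h2⟩ := h
      exact ⟨w, h1, h2.symm⟩
    · obtain ⟨w, h1, h2⟩ := h
      exact ⟨w, h1, h2.symm⟩
    · exact h.symm
  loopless := by
    refine ⟨?_⟩
    rintro (_ | a) h
    · exact h.elim
    · exact G.irrefl h

/-- If a bipartite graph `G` is `[2,k]`-choosable (`k ≥ 2`), then the graph `G'`
obtained by removing a vertex `v` and merging its neighborhood into one vertex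
is `[2,k]`-choosable. -/
theorem contractNbhd_choosable {V : Type*} (G : SimpleGraph V)
    (hbip : ∃ s : Set V, ∀ u w : V, G.Adj u w → (u ∈ s ↔ w ∉ s))
    (v : V) (k : ℕ) (hk : 2 ≤ k) (hG : Choosable G 2 k) :
    Choosable (contractNbhd G v) 2 k := by
  intro L' hL'sub hL'card
  classical
  set L : V → Finset ℕ := fun u =>
    if h : u ≠ v ∧ ¬ G.Adj v u then L' (some ⟨u, h⟩) else L' none with hLdef
  obtain ⟨c, hcmem, hcprop⟩ := hG L
    (by intro u; simp only [L]; split <;> apply hL'sub)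
    (by intro u; simp only [L]; split <;> apply hL'card)
  have hcv : c v ∈ L' none := by
    have := hcmem v
    simpa [L] using this
  have hnbr : ∀ w, G.Adj v w → c w ∈ L' none ∧ c w ≠ c v := by
    intro w hw
    constructor
    · have := hcmem w
      simpa [L, hw] using this
    · exact fun h => (hcprop v w hw) h.symm
  obtain ⟨a, b, hab, hset⟩ := Finset.card_eq_two.mp (hL'card none)
  set x : ℕ := if c v = a then b else a with hxdef
  have hxmem : x ∈ L' none := by
    rw [hset]; by_cases h : c v = a <;> simp [hxdef, h]
  have huniq : ∀ y, y ∈ L' none → y ≠ c v → y = x := by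
    intro y hy hyne
    rw [hset] at hy hcv
    simp only [Finset.mem_insert, Finset.mem_singleton] at hy hcv
    rcases hcv with h | h <;> rcases hy with h' | h' <;>
      simp_all [hxdef]
  refine ⟨fun o => o.elim x (fun u => c u.1), ?_, ?_⟩
  · rintro (_ | u)
    · exact hxmem
    · have := hcmem u.1
      have hL : L u.1 = L' (some u) := by
        simp only [L, dif_pos u.2]
      rwa [hL] at this
  · rintro (_ | p) (_ | q) h
    · exact h.elim
    · obtain ⟨w, hvw, hwq⟩ := h
      obtain ⟨hw1, hw2⟩ := hnbr w hvw
      have hwx : c w = x := huniq _ hw1 hw2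
      simpa [hwx] using hcprop w q.1 hwq
    · obtain ⟨w, hvw, hpw⟩ := h
      obtain ⟨hw1, hw2⟩ := hnbr w hvw
      have hwx : c w = x := huniq _ hw1 hw2
      simpa [hwx] using hcprop p.1 w hpw
    · exact hcprop p.1 q.1 h
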